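/- Let Z be a random variable on a finite sample space with nominal probability vector q (q_ω > 0 for all ω), φ a φ-divergence function, and ρ > 0. Then the worst-case expectation satisfies Lagrangian duality: max{E_p[Z] : I_φ(p,q) ≤ ρ, Σ p_ω = 1, p ≥ 0} = min over λ ≥ 0 and μ ∈ ℝ of μ + ρλ + λ Σ_ω q_ω φ*((Z(ω) − μ)/λ), where for λ = 0 the convention 0·φ*(a/0) = 0 if a ≤ 0 and +∞ if a > 0 applies, provided φ is convex lower semicontinuous with φ(1) = 0 (Slater's condition holds since I_φ(q,q) = 0 < ρ). -/

import Mathlib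

set_option maxHeartbeats 1000000

private lemma ecoe_sum {ι : Type*} (s : Finset ι) (f : ι → ℝ) :
    ((∑ i ∈ s, f i : ℝ) : EReal) = ∑ i ∈ s, ((f i : ℝ) : EReal) :=
  map_sum (⟨⟨Real.toEReal, EReal.coe_zero⟩, EReal.coe_add⟩ : ℝ →+ EReal) f s

private lemma exists_supergrad {f : ℝ → ℝ} {d x₀ : ℝ}
    (hconv : ConvexOn ℝ (Set.Ici d) f) (hx₀ : d < x₀) :
    ∃ g : ℝ, ∀ t ∈ Set.Ici d, f x₀ + g * (t - x₀) ≤ f t := by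
  set S : Set ℝ := (fun t => (f x₀ - f t) / (x₀ - t)) '' (Set.Ico d x₀) with hS
  have hne : S.Nonempty := ⟨_, ⟨d, ⟨le_refl d, hx₀⟩, rfl⟩⟩
  have hub : ∀ s ∈ S, s ≤ (f (x₀ + 1) - f x₀) / (x₀ + 1 - x₀) := by
    rintro s ⟨t, ⟨htd, htx⟩, rfl⟩
    exact hconv.slope_mono_adjacent htd (le_of_lt (lt_trans hx₀ (by linarith))) htx (by linarith)
  have hbdd : BddAbove S := ⟨_, hub⟩
  refine ⟨sSup S, fun t ht => ?_⟩
  rcases lt_trichotomy t x₀ with h | h | h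
  · have h1 : (f x₀ - f t) / (x₀ - t) ≤ sSup S := le_csSup hbdd ⟨t, ⟨ht, h⟩, rfl⟩
    have h2 : f x₀ - f t ≤ sSup S * (x₀ - t) := by
      rw [div_le_iff₀ (by linarith)] at h1; linarith [h1]
    nlinarith [h2]
  · subst h; simp
  · have h1 : sSup S ≤ (f t - f x₀) / (t - x₀) := by
      apply csSup_le hne
      rintro s ⟨u, ⟨hud, hux⟩, rfl⟩
      exact hconv.slope_mono_adjacent hud ht hux h
    have h2 : sSup S * (t - x₀) ≤ f t - f x₀ := by
      rw [le_div_iff₀ (by linarith)] at h1; linarith [h1]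
    linarith

/-- Lagrangian (strong) duality for the worst-case expectation over a
φ-divergence ambiguity set on a finite sample space: the maximum of E_p[Z] over
{p : I_φ(p,q) ≤ ρ, Σp = 1, p ≥ 0} equals the infimum over λ ≥ 0, μ ∈ ℝ of
μ + ρλ + λ Σ_ω q_ω φ*((Z(ω) − μ)/λ), with the convention that for λ = 0 the
term λφ*(a/0) is 0 if a ≤ 0 and +∞ if a > 0. Slater's condition holds since
I_φ(q,q) = 0 < ρ. -/
theorem worst_case_expectation_lagrangian_duality
    (n : ℕ) (φ : ℝ → ℝ) (φstar : ℝ → EReal)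
    (hφconv : ConvexOn ℝ (Set.Ici 0) φ)
    (hφlsc : LowerSemicontinuousOn φ (Set.Ici 0))
    (hφnonneg : ∀ u : ℝ, 0 ≤ u → 0 ≤ φ u)
    (hφone : φ 1 = 0)
    (hφstar : ∀ s : ℝ, φstar s = ⨆ u : {u : ℝ // 0 ≤ u}, ((s * u.1 - φ u.1 : ℝ) : EReal))
    (Z q : Fin n → ℝ) (hq : ∀ ω, 0 < q ω) (hqsum : ∑ ω, q ω = 1)
    (ρ : ℝ) (hρ : 0 < ρ) :
    (⨆ p : {p : Fin n → ℝ // (∀ ω, 0 ≤ p ω) ∧ (∑ ω, p ω = 1) ∧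
        (∑ ω, q ω * φ (p ω / q ω)) ≤ ρ},
      ((∑ ω, p.1 ω * Z ω : ℝ) : EReal)) =
    (⨅ lm : {lm : ℝ × ℝ // 0 ≤ lm.1},
      ((lm.1.2 + ρ * lm.1.1 : ℝ) : EReal) +
        ∑ ω, ((q ω : ℝ) : EReal) *
          (if lm.1.1 = 0 then (if Z ω - lm.1.2 ≤ 0 then (0 : EReal) else ⊤)
           else ((lm.1.1 : ℝ) : EReal) * φstar ((Z ω - lm.1.2) / lm.1.1))) := by
  classical
  rcases Nat.eq_zero_or_pos n with h0 | hn
  · -- degenerate case n = 0 : both sides are ⊥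
    subst h0
    haveI : IsEmpty {p : Fin 0 → ℝ // (∀ ω, 0 ≤ p ω) ∧ (∑ ω, p ω = 1) ∧
        (∑ ω, q ω * φ (p ω / q ω)) ≤ ρ} := by
      refine ⟨fun p => ?_⟩
      have := p.2.2.1
      simp at this
    rw [iSup_of_empty]
    symm
    rw [EReal.eq_bot_iff_forall_lt]
    intro y
    have h1 : (⨅ lm : {lm : ℝ × ℝ // 0 ≤ lm.1},
        ((lm.1.2 + ρ * lm.1.1 : ℝ) : EReal) +
        ∑ ω, ((q ω : ℝ) : EReal) *
          (if lm.1.1 = 0 then (if Z ω - lm.1.2 ≤ 0 then (0 : EReal) else ⊤)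
           else ((lm.1.1 : ℝ) : EReal) * φstar ((Z ω - lm.1.2) / lm.1.1)))
        ≤ ((y - 1 + ρ * 0 : ℝ) : EReal) := by
      refine le_trans (iInf_le _ ⟨(0, y - 1), le_refl 0⟩) ?_
      simp
    refine lt_of_le_of_lt h1 ?_
    rw [EReal.coe_lt_coe_iff]
    linarith
  · -- main case
    set c : (Fin n → ℝ) → ℝ := fun p => ∑ ω, q ω * φ (p ω / q ω) with hc
    set A : ℝ := ∑ ω, |Z ω| with hA
    -- c is nonnegative on nonneg vectors
    have hcnonneg : ∀ p : Fin n → ℝ, (∀ ω, 0 ≤ p ω) → 0 ≤ c p := by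
      intro p hp
      refine Finset.sum_nonneg fun ω _ => ?_
      exact mul_nonneg (hq ω).le (hφnonneg _ (div_nonneg (hp ω) (hq ω).le))
    -- objective bound
    have hbound : ∀ p : Fin n → ℝ, (∀ ω, 0 ≤ p ω) →
        ∑ ω, p ω * Z ω ≤ (∑ ω, p ω) * A := by
      intro p hp
      rw [Finset.sum_mul]
      refine Finset.sum_le_sum fun ω _ => ?_
      have h1 : Z ω ≤ A := by
        calc Z ω ≤ |Z ω| := le_abs_self _
        _ ≤ A := Finset.single_le_sum (f := fun ω => |Z ω|) (fun i _ => abs_nonneg _)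
            (Finset.mem_univ ω)
      exact mul_le_mul_of_nonneg_left h1 (hp ω)
    -- convexity of c
    have hcconv : ∀ p₁ p₂ : Fin n → ℝ, (∀ ω, 0 ≤ p₁ ω) → (∀ ω, 0 ≤ p₂ ω) →
        ∀ a b : ℝ, 0 ≤ a → 0 ≤ b → a + b = 1 →
        c (fun ω => a * p₁ ω + b * p₂ ω) ≤ a * c p₁ + b * c p₂ := by
      intro p₁ p₂ hp₁ hp₂ a b ha hb hab
      simp only [hc, Finset.mul_sum]
      rw [← Finset.sum_add_distrib]
      refine Finset.sum_le_sum fun ω _ => ?_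
      have hqω := hq ω
      have h1 : (a * p₁ ω + b * p₂ ω) / q ω = a * (p₁ ω / q ω) + b * (p₂ ω / q ω) := by
        field_simp
      rw [h1]
      have h2 := hφconv.2 (Set.mem_Ici.2 (div_nonneg (hp₁ ω) hqω.le))
        (Set.mem_Ici.2 (div_nonneg (hp₂ ω) hqω.le)) ha hb hab
      simp only [smul_eq_mul] at h2
      calc q ω * φ (a * (p₁ ω / q ω) + b * (p₂ ω / q ω))
          ≤ q ω * (a * φ (p₁ ω / q ω) + b * φ (p₂ ω / q ω)) :=
            mul_le_mul_of_nonneg_left h2 hqω.le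
        _ = a * (q ω * φ (p₁ ω / q ω)) + b * (q ω * φ (p₂ ω / q ω)) := by ring
    -- c q = 0
    have hcq : c q = 0 := by
      simp only [hc]
      rw [Finset.sum_eq_zero]
      intro ω _
      rw [div_self (hq ω).ne', hφone, mul_zero]
    -- the primal value function
    set SΦ : ℝ → Set ℝ := fun t => {x | ∃ p : Fin n → ℝ, (∀ ω, 0 ≤ p ω) ∧
      ∑ ω, p ω = 1 ∧ c p ≤ t ∧ ∑ ω, p ω * Z ω = x} with hSΦ
    set Φ : ℝ → ℝ := fun t => sSup (SΦ t) with hΦ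
    have hSne : ∀ t : ℝ, 0 ≤ t → (SΦ t).Nonempty := fun t ht =>
      ⟨∑ ω, q ω * Z ω, q, fun ω => (hq ω).le, hqsum, by rw [hcq]; exact ht, rfl⟩
    have hSbdd : ∀ t : ℝ, BddAbove (SΦ t) := by
      intro t
      refine ⟨A, ?_⟩
      rintro x ⟨p, hp, hps, -, rfl⟩
      calc ∑ ω, p ω * Z ω ≤ (∑ ω, p ω) * A := hbound p hp
        _ = A := by rw [hps, one_mul]
    have hΦub : ∀ t : ℝ, ∀ x ∈ SΦ t, x ≤ Φ t := fun t x hx => le_csSup (hSbdd t) hx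
    -- concavity of Φ
    have hΦconc : ∀ t₁ ∈ Set.Ici (0:ℝ), ∀ t₂ ∈ Set.Ici (0:ℝ), ∀ a b : ℝ,
        0 ≤ a → 0 ≤ b → a + b = 1 → a * Φ t₁ + b * Φ t₂ ≤ Φ (a * t₁ + b * t₂) := by
      intro t₁ ht₁ t₂ ht₂ a b ha hb hab
      rcases eq_or_lt_of_le ha with ha0 | ha0
      · have hb1 : b = 1 := by linarith
        rw [← ha0, hb1]; norm_num
      rcases eq_or_lt_of_le hb with hb0 | hb0
      · have ha1 : a = 1 := by linarith
        rw [← hb0, ha1]; norm_num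
      refine le_of_forall_sub_le fun ε hε => ?_
      obtain ⟨x₁, hx₁S, hx₁⟩ := exists_lt_of_lt_csSup (hSne t₁ ht₁)
        (show Φ t₁ - ε / (2 * a) < Φ t₁ by
          have := div_pos hε (by linarith : (0:ℝ) < 2 * a); linarith)
      obtain ⟨x₂, hx₂S, hx₂⟩ := exists_lt_of_lt_csSup (hSne t₂ ht₂)
        (show Φ t₂ - ε / (2 * b) < Φ t₂ by
          have := div_pos hε (by linarith : (0:ℝ) < 2 * b); linarith)
      obtain ⟨p₁, hp₁, hs₁, hc₁, hv₁⟩ := hx₁S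
      obtain ⟨p₂, hp₂, hs₂, hc₂, hv₂⟩ := hx₂S
      have hmem : a * x₁ + b * x₂ ∈ SΦ (a * t₁ + b * t₂) := by
        refine ⟨fun ω => a * p₁ ω + b * p₂ ω, fun ω =>
          add_nonneg (mul_nonneg ha (hp₁ ω)) (mul_nonneg hb (hp₂ ω)), ?_, ?_, ?_⟩
        · rw [Finset.sum_add_distrib, ← Finset.mul_sum, ← Finset.mul_sum, hs₁, hs₂]
          simpa using hab
        · calc c (fun ω => a * p₁ ω + b * p₂ ω) ≤ a * c p₁ + b * c p₂ :=
                hcconv p₁ p₂ hp₁ hp₂ a b ha hb hab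
            _ ≤ a * t₁ + b * t₂ := by
                have := mul_le_mul_of_nonneg_left hc₁ ha
                have := mul_le_mul_of_nonneg_left hc₂ hb
                linarith
        · rw [← hv₁, ← hv₂, Finset.mul_sum, Finset.mul_sum, ← Finset.sum_add_distrib]
          refine Finset.sum_congr rfl fun ω _ => by ring
      have h1 := hΦub _ _ hmem
      have h2 : a * (Φ t₁ - ε / (2 * a)) = a * Φ t₁ - ε / 2 := by field_simp
      have h3 : b * (Φ t₂ - ε / (2 * b)) = b * Φ t₂ - ε / 2 := by field_simp
      have h4 : a * (Φ t₁ - ε / (2 * a)) ≤ a * x₁ := mul_le_mul_of_nonneg_left hx₁.le ha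
      have h5 : b * (Φ t₂ - ε / (2 * b)) ≤ b * x₂ := mul_le_mul_of_nonneg_left hx₂.le hb
      linarith
    have hΦconv : ConvexOn ℝ (Set.Ici (0:ℝ)) (fun t => - Φ t) := by
      refine ⟨convex_Ici 0, fun x hx y hy a b ha hb hab => ?_⟩
      simp only [smul_eq_mul]
      have := hΦconc x hx y hy a b ha hb hab
      linarith
    -- supergradient lam of Φ at ρ
    obtain ⟨g, hg⟩ := exists_supergrad hΦconv hρ
    set lam : ℝ := -g with hlamdef
    have hsg : ∀ t ∈ Set.Ici (0:ℝ), Φ t ≤ Φ ρ + lam * (t - ρ) := by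
      intro t ht
      have := hg t ht
      simp only [hlamdef]
      linarith
    have hL : ∀ t ∈ Set.Ici (0:ℝ), ∑ ω, q ω * Z ω ≤ Φ t := fun t ht =>
      hΦub t _ ⟨q, fun ω => (hq ω).le, hqsum, by rw [hcq]; exact ht, rfl⟩
    have hlamnonneg : 0 ≤ lam := by
      by_contra hneg
      push_neg at hneg
      set L : ℝ := ∑ ω, q ω * Z ω with hLdef
      have hΦρL : L ≤ Φ ρ := hL ρ (le_of_lt hρ)
      have hD : 0 ≤ (Φ ρ - L + 1) / (-lam) := div_nonneg (by linarith) (by linarith)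
      have h1 : L ≤ Φ (ρ + (Φ ρ - L + 1) / (-lam)) := hL _ (Set.mem_Ici.2 (by linarith))
      have h2 := hsg (ρ + (Φ ρ - L + 1) / (-lam)) (Set.mem_Ici.2 (by linarith))
      have hne : -lam ≠ 0 := by linarith
      have h3 : lam * ((ρ + (Φ ρ - L + 1) / (-lam)) - ρ) = -(Φ ρ - L + 1) := by
        field_simp
        have hlne : lam ≠ 0 := fun h => hne (by rw [h, neg_zero])
        rw [add_sub_cancel_left, mul_neg, mul_div_assoc', mul_comm, mul_div_assoc,
          div_self hlne, mul_one]
      linarith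
    -- primal value = coe (Φ ρ)
    have hprimal : ((Φ ρ : ℝ) : EReal) ≤
        (⨆ p : {p : Fin n → ℝ // (∀ ω, 0 ≤ p ω) ∧ (∑ ω, p ω = 1) ∧
          (∑ ω, q ω * φ (p ω / q ω)) ≤ ρ},
        ((∑ ω, p.1 ω * Z ω : ℝ) : EReal)) := by
      set M := (⨆ p : {p : Fin n → ℝ // (∀ ω, 0 ≤ p ω) ∧ (∑ ω, p ω = 1) ∧
          (∑ ω, q ω * φ (p ω / q ω)) ≤ ρ},
        ((∑ ω, p.1 ω * Z ω : ℝ) : EReal)) with hM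
      by_cases htop : M = ⊤
      · rw [htop]; exact le_top
      · have hqρ : (∑ ω, q ω * φ (q ω / q ω)) ≤ ρ := by
          have : c q ≤ ρ := by rw [hcq]; exact hρ.le
          exact this
        have hbotle : ((∑ ω, q ω * Z ω : ℝ) : EReal) ≤ M :=
          le_iSup (fun p : {p : Fin n → ℝ // (∀ ω, 0 ≤ p ω) ∧ (∑ ω, p ω = 1) ∧
              (∑ ω, q ω * φ (p ω / q ω)) ≤ ρ} => ((∑ ω, p.1 ω * Z ω : ℝ) : EReal))
            ⟨q, fun ω => (hq ω).le, hqsum, hqρ⟩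
        have hbot : M ≠ ⊥ := fun h => by
          rw [h, le_bot_iff] at hbotle
          exact EReal.coe_ne_bot _ hbotle
        have hMre : ((M.toReal : ℝ) : EReal) = M := EReal.coe_toReal htop hbot
        have hΦle : Φ ρ ≤ M.toReal := by
          refine csSup_le (hSne ρ hρ.le) ?_
          rintro x ⟨p, hp, hs, hcp, rfl⟩
          have h1 : ((∑ ω, p ω * Z ω : ℝ) : EReal) ≤ M :=
            le_iSup (fun p : {p : Fin n → ℝ // (∀ ω, 0 ≤ p ω) ∧ (∑ ω, p ω = 1) ∧
                (∑ ω, q ω * φ (p ω / q ω)) ≤ ρ} => ((∑ ω, p.1 ω * Z ω : ℝ) : EReal))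
              ⟨p, hp, hs, hcp⟩
          rw [← hMre] at h1
          exact_mod_cast h1
        exact le_trans (EReal.coe_le_coe_iff.2 hΦle) hMre.le
    -- weak duality
    have hweak : ∀ (p : {p : Fin n → ℝ // (∀ ω, 0 ≤ p ω) ∧ (∑ ω, p ω = 1) ∧
          (∑ ω, q ω * φ (p ω / q ω)) ≤ ρ}) (lm : {lm : ℝ × ℝ // 0 ≤ lm.1}),
        ((∑ ω, p.1 ω * Z ω : ℝ) : EReal) ≤
        ((lm.1.2 + ρ * lm.1.1 : ℝ) : EReal) +
          ∑ ω, ((q ω : ℝ) : EReal) *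
            (if lm.1.1 = 0 then (if Z ω - lm.1.2 ≤ 0 then (0 : EReal) else ⊤)
             else ((lm.1.1 : ℝ) : EReal) * φstar ((Z ω - lm.1.2) / lm.1.1)) := by
      rintro ⟨p, hp, hs, hcp⟩ ⟨⟨l, μ⟩, hl⟩
      simp only
      by_cases hl0 : l = 0
      · subst hl0
        simp only [eq_self_iff_true, if_true]
        by_cases hall : ∀ ω, Z ω - μ ≤ 0
        · have hterm : ∀ ω : Fin n, ((q ω : ℝ) : EReal) *
              (if Z ω - μ ≤ 0 then (0 : EReal) else ⊤) = 0 := fun ω => by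
            rw [if_pos (hall ω), mul_zero]
          rw [Finset.sum_congr rfl fun ω _ => hterm ω, Finset.sum_const_zero, add_zero]
          rw [EReal.coe_le_coe_iff]
          have h1 : ∑ ω, p ω * Z ω ≤ ∑ ω, p ω * μ := by
            refine Finset.sum_le_sum fun ω _ => mul_le_mul_of_nonneg_left ?_ (hp ω)
            linarith [hall ω]
          have h2 : ∑ ω, p ω * μ = μ := by rw [← Finset.sum_mul, hs, one_mul]
          have : μ + ρ * 0 = μ := by ring
          rw [this]
          linarith
        · push_neg at hall
          obtain ⟨ω₁, hω₁⟩ := hall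
          have hsum : (∑ ω, ((q ω : ℝ) : EReal) *
              (if Z ω - μ ≤ 0 then (0 : EReal) else ⊤)) = ⊤ := by
            have h1 : ((q ω₁ : ℝ) : EReal) * (if Z ω₁ - μ ≤ 0 then (0 : EReal) else ⊤) = ⊤ := by
              rw [if_neg (not_le.2 hω₁)]
              exact EReal.coe_mul_top_of_pos (hq ω₁)
            have h2 : ∀ ω : Fin n, (0 : EReal) ≤ ((q ω : ℝ) : EReal) *
                (if Z ω - μ ≤ 0 then (0 : EReal) else ⊤) := fun ω => by
              split
              · rw [mul_zero]
              · rw [EReal.coe_mul_top_of_pos (hq ω)]; exact le_top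
            have h3 := Finset.single_le_sum (f := fun ω : Fin n => ((q ω : ℝ) : EReal) *
                (if Z ω - μ ≤ 0 then (0 : EReal) else ⊤)) (fun ω _ => h2 ω)
                (Finset.mem_univ ω₁)
            rw [h1] at h3
            exact top_le_iff.1 h3
          rw [hsum]
          rw [EReal.add_top_of_ne_bot (EReal.coe_ne_bot _)]
          exact le_top
      · have hlpos : 0 < l := lt_of_le_of_ne hl (Ne.symm hl0)
        simp only [if_neg hl0]
        have hkey : ∀ ω : Fin n,
            ((q ω * (l * ((Z ω - μ) / l * (p ω / q ω) - φ (p ω / q ω))) : ℝ) : EReal) ≤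
            ((q ω : ℝ) : EReal) * (((l : ℝ) : EReal) * φstar ((Z ω - μ) / l)) := by
          intro ω
          have h1 : ((((Z ω - μ) / l * (p ω / q ω) - φ (p ω / q ω)) : ℝ) : EReal) ≤
              φstar ((Z ω - μ) / l) := by
            rw [hφstar]
            exact le_iSup (fun u : {u : ℝ // 0 ≤ u} =>
              (((Z ω - μ) / l * u.1 - φ u.1 : ℝ) : EReal))
              ⟨p ω / q ω, div_nonneg (hp ω) (hq ω).le⟩
          calc ((q ω * (l * ((Z ω - μ) / l * (p ω / q ω) - φ (p ω / q ω))) : ℝ) : EReal)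
              = ((q ω : ℝ) : EReal) * (((l : ℝ) : EReal) *
                ((((Z ω - μ) / l * (p ω / q ω) - φ (p ω / q ω)) : ℝ) : EReal)) := by
                rw [← EReal.coe_mul, ← EReal.coe_mul]
            _ ≤ ((q ω : ℝ) : EReal) * (((l : ℝ) : EReal) * φstar ((Z ω - μ) / l)) := by
                refine mul_le_mul_of_nonneg_left ?_ (EReal.coe_nonneg.2 (hq ω).le)
                exact mul_le_mul_of_nonneg_left h1 (EReal.coe_nonneg.2 hl)
        have hsum : ((∑ ω, q ω * (l * ((Z ω - μ) / l * (p ω / q ω) - φ (p ω / q ω))) : ℝ) : EReal)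
            ≤ ∑ ω, ((q ω : ℝ) : EReal) * (((l : ℝ) : EReal) * φstar ((Z ω - μ) / l)) := by
          rw [ecoe_sum]
          exact Finset.sum_le_sum fun ω _ => hkey ω
        have hreal : ∑ ω, p ω * Z ω ≤
            (μ + ρ * l) + ∑ ω, q ω * (l * ((Z ω - μ) / l * (p ω / q ω) - φ (p ω / q ω))) := by
          have hterm : ∀ ω : Fin n, q ω * (l * ((Z ω - μ) / l * (p ω / q ω) - φ (p ω / q ω)))
              = p ω * Z ω - μ * p ω - l * (q ω * φ (p ω / q ω)) := by
            intro ω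
            have hqω := (hq ω).ne'
            field_simp
          rw [Finset.sum_congr rfl fun ω _ => hterm ω]
          rw [Finset.sum_sub_distrib, Finset.sum_sub_distrib, ← Finset.mul_sum,
            ← Finset.mul_sum, hs, mul_one]
          have h2 : l * (∑ ω, q ω * φ (p ω / q ω)) ≤ l * ρ :=
            mul_le_mul_of_nonneg_left hcp hl
          linarith
        calc ((∑ ω, p ω * Z ω : ℝ) : EReal)
            ≤ (((μ + ρ * l) + ∑ ω, q ω * (l * ((Z ω - μ) / l * (p ω / q ω) - φ (p ω / q ω))) : ℝ)
              : EReal) := EReal.coe_le_coe_iff.2 hreal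
          _ = ((μ + ρ * l : ℝ) : EReal) +
              ((∑ ω, q ω * (l * ((Z ω - μ) / l * (p ω / q ω) - φ (p ω / q ω))) : ℝ) : EReal) := by
              rw [EReal.coe_add]
          _ ≤ ((μ + ρ * l : ℝ) : EReal) +
              ∑ ω, ((q ω : ℝ) : EReal) * (((l : ℝ) : EReal) * φstar ((Z ω - μ) / l)) := by
              exact add_le_add_right hsum _
    -- strong duality: a dual point with value at most Φ ρ
    have hstrong : ∃ lm : {lm : ℝ × ℝ // 0 ≤ lm.1},
        (((lm.1.2 + ρ * lm.1.1 : ℝ) : EReal) +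
          ∑ ω, ((q ω : ℝ) : EReal) *
            (if lm.1.1 = 0 then (if Z ω - lm.1.2 ≤ 0 then (0 : EReal) else ⊤)
             else ((lm.1.1 : ℝ) : EReal) * φstar ((Z ω - lm.1.2) / lm.1.1)))
          ≤ ((Φ ρ : ℝ) : EReal) := by
      have hqle1 : ∀ ω : Fin n, q ω ≤ 1 := fun ω => by
        have h := Finset.single_le_sum (f := q) (fun i _ => (hq i).le) (Finset.mem_univ ω)
        rw [hqsum] at h
        exact h
      rcases eq_or_lt_of_le hlamnonneg with hlam0 | hlampos
      · -- case lam = 0 : use the dual point (0, max Z)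
        obtain ⟨ωm, -, hωm⟩ := Finset.exists_max_image (Finset.univ : Finset (Fin n)) Z
          ⟨⟨0, hn⟩, Finset.mem_univ _⟩
        set B : ℝ := ∑ ω, q ω * max (φ 0) (φ (1 / q ω)) with hBdef
        have hB0 : 0 ≤ B := Finset.sum_nonneg fun ω _ => mul_nonneg (hq ω).le
          (le_trans (hφnonneg 0 le_rfl) (le_max_left _ _))
        have hcB : ∀ p : Fin n → ℝ, (∀ ω, 0 ≤ p ω) → (∑ ω, p ω = 1) → c p ≤ B := by
          intro p hp hs
          refine Finset.sum_le_sum fun ω _ => mul_le_mul_of_nonneg_left ?_ (hq ω).le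
          have hp1 : p ω ≤ 1 := by
            have h := Finset.single_le_sum (f := p) (fun i _ => hp i) (Finset.mem_univ ω)
            rw [hs] at h
            exact h
          have hqinv : (0:ℝ) ≤ 1 / q ω := by
            have := hq ω
            positivity
          have hseg : p ω / q ω ∈ segment ℝ (0:ℝ) (1 / q ω) := by
            rw [segment_eq_Icc hqinv]
            refine ⟨div_nonneg (hp ω) (hq ω).le, ?_⟩
            gcongr
            exact (hq ω).le
          exact hφconv.le_on_segment (Set.mem_Ici.2 le_rfl) (Set.mem_Ici.2 hqinv) hseg
        have hmem : Z ωm ∈ SΦ B := by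
          refine ⟨fun ω => if ω = ωm then 1 else 0, fun ω => ?_, ?_, ?_, ?_⟩
          · by_cases hω : ω = ωm <;> simp [hω]
          · simp
          · exact hcB _ (fun ω => by by_cases hω : ω = ωm <;> simp [hω]) (by simp)
          · simp [ite_mul]
        have hZm : Z ωm ≤ Φ ρ := by
          have h1 : Z ωm ≤ Φ B := hΦub B _ hmem
          have h2 : Φ B ≤ Φ ρ + lam * (B - ρ) := hsg B hB0
          rw [← hlam0] at h2
          linarith
        refine ⟨⟨(0, Z ωm), le_refl 0⟩, ?_⟩
        simp only [eq_self_iff_true, if_true]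
        have hterm : ∀ ω : Fin n, ((q ω : ℝ) : EReal) *
            (if Z ω - Z ωm ≤ 0 then (0 : EReal) else ⊤) = 0 := fun ω => by
          rw [if_pos (by linarith [hωm ω (Finset.mem_univ ω)] : Z ω - Z ωm ≤ 0), mul_zero]
        rw [Finset.sum_congr rfl fun ω _ => hterm ω, Finset.sum_const_zero, add_zero,
          EReal.coe_le_coe_iff]
        linarith
      · -- case lam > 0
        set SF : ℝ → Set ℝ := fun b => {x | ∃ p : Fin n → ℝ, (∀ ω, 0 ≤ p ω) ∧
          ∑ ω, p ω = 1 + b ∧ ∑ ω, p ω * Z ω - lam * c p = x} with hSFdef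
        set F : ℝ → ℝ := fun b => sSup (SF b) with hFdef
        have hSFne : ∀ b : ℝ, -1 ≤ b → (SF b).Nonempty := fun b hb =>
          ⟨_, fun ω => (1 + b) * q ω, fun ω => mul_nonneg (by linarith) (hq ω).le, by
            rw [← Finset.mul_sum, hqsum, mul_one], rfl⟩
        have hSFbdd : ∀ b : ℝ, BddAbove (SF b) := by
          intro b
          refine ⟨(1 + b) * A, ?_⟩
          rintro x ⟨p, hp, hs, rfl⟩
          have h1 : ∑ ω, p ω * Z ω ≤ (1 + b) * A := by
            rw [← hs]
            exact hbound p hp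
          have h2 : 0 ≤ lam * c p := mul_nonneg hlamnonneg (hcnonneg p hp)
          linarith
        have hFub : ∀ b : ℝ, ∀ x ∈ SF b, x ≤ F b := fun b x hx => le_csSup (hSFbdd b) hx
        -- concavity of F
        have hFconc : ∀ t₁ ∈ Set.Ici (-1:ℝ), ∀ t₂ ∈ Set.Ici (-1:ℝ), ∀ a b : ℝ,
            0 ≤ a → 0 ≤ b → a + b = 1 → a * F t₁ + b * F t₂ ≤ F (a * t₁ + b * t₂) := by
          intro t₁ ht₁ t₂ ht₂ a b ha hb hab
          rcases eq_or_lt_of_le ha with ha0 | ha0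
          · have hb1 : b = 1 := by linarith
            rw [← ha0, hb1]; norm_num
          rcases eq_or_lt_of_le hb with hb0 | hb0
          · have ha1 : a = 1 := by linarith
            rw [← hb0, ha1]; norm_num
          refine le_of_forall_sub_le fun ε hε => ?_
          obtain ⟨x₁, hx₁S, hx₁⟩ := exists_lt_of_lt_csSup (hSFne t₁ ht₁)
            (show F t₁ - ε / (2 * a) < F t₁ by
              have := div_pos hε (by linarith : (0:ℝ) < 2 * a); linarith)
          obtain ⟨x₂, hx₂S, hx₂⟩ := exists_lt_of_lt_csSup (hSFne t₂ ht₂)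
            (show F t₂ - ε / (2 * b) < F t₂ by
              have := div_pos hε (by linarith : (0:ℝ) < 2 * b); linarith)
          obtain ⟨p₁, hp₁, hs₁, hv₁⟩ := hx₁S
          obtain ⟨p₂, hp₂, hs₂, hv₂⟩ := hx₂S
          have hvmix : ∑ ω, (a * p₁ ω + b * p₂ ω) * Z ω -
              lam * c (fun ω => a * p₁ ω + b * p₂ ω) ∈ SF (a * t₁ + b * t₂) := by
            refine ⟨fun ω => a * p₁ ω + b * p₂ ω, fun ω =>
              add_nonneg (mul_nonneg ha (hp₁ ω)) (mul_nonneg hb (hp₂ ω)), ?_, rfl⟩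
            rw [Finset.sum_add_distrib, ← Finset.mul_sum, ← Finset.mul_sum, hs₁, hs₂]
            linear_combination hab
          have h1 := hFub _ _ hvmix
          have hcmix : c (fun ω => a * p₁ ω + b * p₂ ω) ≤ a * c p₁ + b * c p₂ :=
            hcconv p₁ p₂ hp₁ hp₂ a b ha hb hab
          have hzs : ∑ ω, (a * p₁ ω + b * p₂ ω) * Z ω
              = a * (∑ ω, p₁ ω * Z ω) + b * (∑ ω, p₂ ω * Z ω) := by
            rw [Finset.mul_sum, Finset.mul_sum, ← Finset.sum_add_distrib]
            exact Finset.sum_congr rfl fun ω _ => by ring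
          have h2 : a * x₁ + b * x₂ ≤ ∑ ω, (a * p₁ ω + b * p₂ ω) * Z ω -
              lam * c (fun ω => a * p₁ ω + b * p₂ ω) := by
            rw [hzs, ← hv₁, ← hv₂]
            have h3 : lam * c (fun ω => a * p₁ ω + b * p₂ ω) ≤
                lam * (a * c p₁ + b * c p₂) := mul_le_mul_of_nonneg_left hcmix hlamnonneg
            have h8 : a * (∑ ω, p₁ ω * Z ω - lam * c p₁) + b * (∑ ω, p₂ ω * Z ω - lam * c p₂)
                = a * (∑ ω, p₁ ω * Z ω) + b * (∑ ω, p₂ ω * Z ω)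
                  - lam * (a * c p₁ + b * c p₂) := by ring
            linarith [h3, h8]
          have h4 : a * (F t₁ - ε / (2 * a)) = a * F t₁ - ε / 2 := by field_simp
          have h5 : b * (F t₂ - ε / (2 * b)) = b * F t₂ - ε / 2 := by field_simp
          have h6 : a * (F t₁ - ε / (2 * a)) ≤ a * x₁ := mul_le_mul_of_nonneg_left hx₁.le ha
          have h7 : b * (F t₂ - ε / (2 * b)) ≤ b * x₂ := mul_le_mul_of_nonneg_left hx₂.le hb
          linarith
        have hFconv : ConvexOn ℝ (Set.Ici (-1:ℝ)) (fun b => - F b) := by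
          refine ⟨convex_Ici _, fun x hx y hy a b ha hb hab => ?_⟩
          simp only [smul_eq_mul]
          have := hFconc x hx y hy a b ha hb hab
          linarith
        obtain ⟨g₂, hg₂⟩ := exists_supergrad hFconv (by norm_num : (-1:ℝ) < 0)
        set μ₀ : ℝ := -g₂ with hμ₀def
        have hsgF : ∀ t ∈ Set.Ici (-1:ℝ), F t ≤ F 0 + μ₀ * t := by
          intro t ht
          have h := hg₂ t ht
          simp only [hμ₀def]
          linarith
        -- the key Lagrangian bound
        have key : ∀ p : Fin n → ℝ, (∀ ω, 0 ≤ p ω) →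
            ∑ ω, p ω * Z ω - lam * c p ≤ F 0 + μ₀ * (∑ ω, p ω - 1) := by
          intro p hp
          have hsum0 : 0 ≤ ∑ ω, p ω := Finset.sum_nonneg fun ω _ => hp ω
          have hmem : ∑ ω, p ω * Z ω - lam * c p ∈ SF (∑ ω, p ω - 1) :=
            ⟨p, hp, by ring, rfl⟩
          have h1 := hFub _ _ hmem
          have h2 := hsgF (∑ ω, p ω - 1) (by simp only [Set.mem_Ici]; linarith)
          linarith
        -- F 0 is at most Φ ρ - lam * ρ
        have hG : F 0 ≤ Φ ρ - lam * ρ := by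
          refine csSup_le (hSFne 0 (by norm_num)) ?_
          rintro x ⟨p, hp, hs, rfl⟩
          rw [show (1:ℝ) + 0 = 1 by norm_num] at hs
          have hcp0 : 0 ≤ c p := hcnonneg p hp
          have h1 : ∑ ω, p ω * Z ω ≤ Φ (c p) := hΦub (c p) _ ⟨p, hp, hs, le_rfl, rfl⟩
          have h2 : Φ (c p) ≤ Φ ρ + lam * (c p - ρ) := hsg (c p) hcp0
          nlinarith [h1, h2]
        -- upper bound on φstar at the relevant points
        have hφstar_ub : ∀ ω : Fin n, φstar ((Z ω - μ₀) / lam) ≤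
            (((F 0 - μ₀ + lam * φ 0) / (q ω * lam) : ℝ) : EReal) := by
          intro ω
          rw [hφstar]
          refine iSup_le ?_
          rintro ⟨u, hu⟩
          rw [EReal.coe_le_coe_iff]
          have harg : ∀ ω' : Fin n, ((if ω' = ω then q ω * u else 0) / q ω')
              = (if ω' = ω then u else 0) := by
            intro ω'
            split
            · rename_i h; subst h; exact mul_div_cancel_left₀ u (hq ω').ne'
            · exact zero_div _
          have hcval : c (fun ω' => if ω' = ω then q ω * u else 0)
              = q ω * φ u + (1 - q ω) * φ 0 := by
            have h1 : ∀ ω' : Fin n, q ω' * φ ((if ω' = ω then q ω * u else 0) / q ω')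
                = q ω' * φ 0 + (if ω' = ω then q ω' * (φ u - φ 0) else 0) := by
              intro ω'
              rw [harg ω']
              split <;> ring
            show (∑ ω', q ω' * φ ((if ω' = ω then q ω * u else 0) / q ω'))
              = q ω * φ u + (1 - q ω) * φ 0
            rw [Finset.sum_congr rfl fun ω' _ => h1 ω', Finset.sum_add_distrib,
              ← Finset.sum_mul, hqsum, Finset.sum_ite_eq' Finset.univ ω
                (fun ω' => q ω' * (φ u - φ 0))]
            simp only [Finset.mem_univ, if_true]
            ring
          have hsump : ∑ ω', (if ω' = ω then q ω * u else 0) = q ω * u := by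
            rw [Finset.sum_ite_eq' Finset.univ ω (fun _ => q ω * u)]
            simp
          have hsumZ : ∑ ω', (if ω' = ω then q ω * u else 0) * Z ω' = q ω * u * Z ω := by
            have h1 : ∀ ω' : Fin n, (if ω' = ω then q ω * u else 0) * Z ω'
                = (if ω' = ω then q ω * u * Z ω' else 0) := fun ω' => by
              split <;> simp
            rw [Finset.sum_congr rfl fun ω' _ => h1 ω',
              Finset.sum_ite_eq' Finset.univ ω (fun ω' => q ω * u * Z ω')]
            simp
          have hkeyp := key (fun ω' => if ω' = ω then q ω * u else 0)
            (fun ω' => by by_cases hω : ω' = ω <;>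
              simp [hω, mul_nonneg (hq ω).le hu])
          rw [show c (fun ω' => if ω' = ω then q ω * u else 0)
              = q ω * φ u + (1 - q ω) * φ 0 from hcval, hsump, hsumZ] at hkeyp
          rw [le_div_iff₀ (show (0:ℝ) < q ω * lam from mul_pos (hq ω) hlampos)]
          have hid : ((Z ω - μ₀) / lam * u - φ u) * (q ω * lam)
              = q ω * u * Z ω - μ₀ * (q ω * u) - lam * (q ω * φ u) := by
            field_simp
          rw [hid]
          nlinarith [hkeyp, mul_nonneg (mul_nonneg hlampos.le (hq ω).le) (hφnonneg 0 le_rfl)]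
        -- φstar values are finite reals there
        set x : Fin n → ℝ := fun ω => (φstar ((Z ω - μ₀) / lam)).toReal with hxdef
        have hxeq : ∀ ω : Fin n, φstar ((Z ω - μ₀) / lam) = ((x ω : ℝ) : EReal) := by
          intro ω
          simp only [hxdef]
          have hub := hφstar_ub ω
          have hlb : ((((Z ω - μ₀) / lam) * 0 - φ 0 : ℝ) : EReal) ≤ φstar ((Z ω - μ₀) / lam) := by
            rw [hφstar]
            exact le_iSup (fun u : {u : ℝ // 0 ≤ u} =>
              (((Z ω - μ₀) / lam * u.1 - φ u.1 : ℝ) : EReal)) ⟨0, le_rfl⟩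
          have h1 : φstar ((Z ω - μ₀) / lam) ≠ ⊤ := fun h => by
            rw [h] at hub
            exact absurd hub (not_le.2 (EReal.coe_lt_top _))
          have h2 : φstar ((Z ω - μ₀) / lam) ≠ ⊥ := fun h => by
            rw [h, le_bot_iff] at hlb
            exact EReal.coe_ne_bot _ hlb
          exact (EReal.coe_toReal h1 h2).symm
        -- the main real bound
        have hxsum : ∑ ω, q ω * (lam * x ω) ≤ F 0 - μ₀ := by
          refine le_of_forall_sub_le fun ε hε => ?_
          have hchoice : ∀ ω : Fin n, ∃ u : ℝ, 0 ≤ u ∧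
              x ω - ε / lam < (Z ω - μ₀) / lam * u - φ u := by
            intro ω
            have h1 : ((x ω - ε / lam : ℝ) : EReal) < φstar ((Z ω - μ₀) / lam) := by
              rw [hxeq ω, EReal.coe_lt_coe_iff]
              have := div_pos hε hlampos
              linarith
            rw [hφstar] at h1
            obtain ⟨u, hu⟩ := lt_iSup_iff.1 h1
            exact ⟨u.1, u.2, EReal.coe_lt_coe_iff.1 hu⟩
          choose u hu0 hult using hchoice
          have hcqu : c (fun ω => q ω * u ω) = ∑ ω, q ω * φ (u ω) :=
            Finset.sum_congr rfl fun ω _ => by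
              rw [mul_div_cancel_left₀ _ (hq ω).ne']
          have hkeyu := key (fun ω => q ω * u ω) (fun ω => mul_nonneg (hq ω).le (hu0 ω))
          rw [hcqu] at hkeyu
          have hper : ∀ ω : Fin n, q ω * (lam * x ω) ≤
              q ω * u ω * Z ω - μ₀ * (q ω * u ω) - lam * (q ω * φ (u ω)) + ε * q ω := by
            intro ω
            have h1 := mul_lt_mul_of_pos_left (hult ω)
              (show (0:ℝ) < q ω * lam from mul_pos (hq ω) hlampos)
            have h2 : q ω * lam * (x ω - ε / lam) = q ω * (lam * x ω) - ε * q ω := by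
              field_simp
            have h3 : q ω * lam * ((Z ω - μ₀) / lam * u ω - φ (u ω))
                = q ω * u ω * Z ω - μ₀ * (q ω * u ω) - lam * (q ω * φ (u ω)) := by
              field_simp
            rw [h2, h3] at h1
            linarith
          have hsumper := Finset.sum_le_sum fun ω (_ : ω ∈ Finset.univ) => hper ω
          rw [Finset.sum_add_distrib, Finset.sum_sub_distrib, Finset.sum_sub_distrib,
            ← Finset.mul_sum, ← Finset.mul_sum, ← Finset.mul_sum, hqsum, mul_one] at hsumper
          linarith
        -- assemble the dual value
        refine ⟨⟨(lam, μ₀), hlamnonneg⟩, ?_⟩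
        simp only [if_neg hlampos.ne']
        have hterm : ∀ ω : Fin n, ((q ω : ℝ) : EReal) *
            (((lam : ℝ) : EReal) * φstar ((Z ω - μ₀) / lam))
            = ((q ω * (lam * x ω) : ℝ) : EReal) := fun ω => by
          rw [hxeq ω, ← EReal.coe_mul, ← EReal.coe_mul]
        rw [Finset.sum_congr rfl fun ω _ => hterm ω, ← ecoe_sum, ← EReal.coe_add,
          EReal.coe_le_coe_iff]
        linarith
    refine le_antisymm (le_iInf fun lm => iSup_le fun p => hweak p lm) ?_
    obtain ⟨lm, hlm⟩ := hstrong
    exact le_trans (iInf_le _ lm) (le_trans hlm hprimal)
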